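/- Let r ≥ 4 and i ≥ 2 be integers, and suppose s is a positive integer satisfying binom(i+1,2)·s ≥ binom(r+i,i) − (i+1). Then the inequality (4s/(r−2))·(s+1)^3 ≥ i·s holds. -/
import Mathlib

set_option maxHeartbeats 1000000

/-- If `r ≥ 4`, `i ≥ 2` and `s ≥ 1` is an integer with
`binom(i+1,2) s + (i+1) ≥ binom(r+i,i)`, then `(4s/(r-2))(s+1)^3 ≥ i s`. -/
theorem stmt_5 (r i s : ℕ) (hr : 4 ≤ r) (hi : 2 ≤ i) (hs : 1 ≤ s)
    (hge : ((i + 1).choose 2) * s + (i + 1) ≥ (r + i).choose i) :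
    (4 * (s : ℚ) / ((r : ℚ) - 2)) * ((s : ℚ) + 1) ^ 3 ≥ (i : ℚ) * (s : ℚ) := by
  -- choose comparisons
  have hC4 : (i+4).choose 4 ≤ (r+i).choose i := by
    have h1 : (i+4).choose i = (i+4).choose 4 := by
      have := Nat.choose_symm (show 4 ≤ i+4 by omega)
      simpa using this
    calc (i+4).choose 4 = (i+4).choose i := h1.symm
      _ ≤ (r+i).choose i := Nat.choose_le_choose i (by omega)
  have hC2 : (r+2).choose 2 ≤ (r+i).choose i := by
    have h1 : (r+2).choose r = (r+2).choose 2 := by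
      have := Nat.choose_symm (show 2 ≤ r+2 by omega)
      simpa using this
    have h2 : (r+i).choose r = (r+i).choose i := by
      have := Nat.choose_symm (show i ≤ r+i by omega)
      simpa using this
    calc (r+2).choose 2 = (r+2).choose r := h1.symm
      _ ≤ (r+i).choose r := Nat.choose_le_choose r (by omega)
      _ = (r+i).choose i := h2
  -- numeric values of small binomials
  have hT : 2 * (i+1).choose 2 = (i+1) * i := by
    rw [Nat.choose_two_right, Nat.add_sub_cancel]
    have hd : 2 ∣ (i+1) * i := by
      rw [mul_comm]; exact (Nat.even_mul_succ_self i).two_dvd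
    exact Nat.mul_div_cancel' hd
  have hc2r : 2 * (r+2).choose 2 = (r+2) * (r+1) := by
    rw [Nat.choose_two_right, show r+2-1 = r+1 by omega]
    have hd : 2 ∣ (r+2) * (r+1) := by
      have : 2 ∣ (r+1) * (r+2) := (Nat.even_mul_succ_self (r+1)).two_dvd
      rwa [mul_comm] at this
    exact Nat.mul_div_cancel' hd
  have hc4 : 24 * (i+4).choose 4 = (i+4) * (i+3) * (i+2) * (i+1) := by
    have h := Nat.choose_mul_factorial_mul_factorial (show 4 ≤ i+4 by omega)
    have h4 : (i+4) - 4 = i := by omega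
    rw [h4] at h
    have hf : Nat.factorial (i+4) = (i+4) * (i+3) * (i+2) * (i+1) * Nat.factorial i := by
      rw [show i+4 = (i+3)+1 from rfl, Nat.factorial_succ,
          show i+3 = (i+2)+1 from rfl, Nat.factorial_succ,
          show i+2 = (i+1)+1 from rfl, Nat.factorial_succ,
          Nat.factorial_succ]
      ring
    rw [show Nat.factorial 4 = 24 from rfl, hf] at h
    exact Nat.eq_of_mul_eq_mul_right (Nat.factorial_pos i)
      (by linarith [h])
  -- T*(s+1) ≥ C in ℕ
  have hTC : (i+1) ≤ (i+1).choose 2 := by nlinarith [hT]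
  have hTA : (r+i).choose i ≤ (i+1).choose 2 * (s+1) := by
    calc (r+i).choose i ≤ (i+1).choose 2 * s + (i+1) := hge
      _ ≤ (i+1).choose 2 * s + (i+1).choose 2 := by omega
      _ = (i+1).choose 2 * (s+1) := by ring
  -- cast facts to ℚ
  set C : ℚ := ((r+i).choose i : ℚ) with hCdef
  have E1 : 2 * C ≤ ((i:ℚ)+1) * i * ((s:ℚ)+1) := by
    have h2 : 2 * ((r+i).choose i) ≤ ((i+1)*i) * (s+1) := by
      calc 2 * ((r+i).choose i) ≤ 2 * ((i+1).choose 2 * (s+1)) := by omega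
        _ = (2 * (i+1).choose 2) * (s+1) := by ring
        _ = ((i+1)*i) * (s+1) := by rw [hT]
    have h3 := (Nat.cast_le (α := ℚ)).mpr h2
    push_cast at h3
    linarith
  have E2 : ((i:ℚ)+4) * ((i:ℚ)+3) * ((i:ℚ)+2) * ((i:ℚ)+1) ≤ 24 * C := by
    have h2 : (i+4)*(i+3)*(i+2)*(i+1) ≤ 24 * ((r+i).choose i) := by
      calc (i+4)*(i+3)*(i+2)*(i+1) = 24 * (i+4).choose 4 := hc4.symm
        _ ≤ 24 * ((r+i).choose i) := by omega
    have h3 := (Nat.cast_le (α := ℚ)).mpr h2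
    push_cast at h3
    linarith
  have E3 : ((r:ℚ)+2) * ((r:ℚ)+1) ≤ 2 * C := by
    have h2 : (r+2)*(r+1) ≤ 2 * ((r+i).choose i) := by
      calc (r+2)*(r+1) = 2 * (r+2).choose 2 := hc2r.symm
        _ ≤ 2 * ((r+i).choose i) := by omega
    have h3 := (Nat.cast_le (α := ℚ)).mpr h2
    push_cast at h3
    linarith
  have hi' : (2:ℚ) ≤ (i:ℚ) := by exact_mod_cast hi
  have hr' : (4:ℚ) ≤ (r:ℚ) := by exact_mod_cast hr
  have hs' : (1:ℚ) ≤ (s:ℚ) := by exact_mod_cast hs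
  -- step 1 : i ≤ 2*(s+1)
  have hposi : (0:ℚ) < 6*(i:ℚ)*((i:ℚ)+1) := by nlinarith [hi']
  have h1 : (i:ℚ) ≤ 2*((s:ℚ)+1) := by
    have hkey : (i:ℚ) * (6*(i:ℚ)*((i:ℚ)+1)) ≤ (2*((s:ℚ)+1)) * (6*(i:ℚ)*((i:ℚ)+1)) := by
      nlinarith [E1, E2, hi', hs']
    exact le_of_mul_le_mul_right hkey hposi
  -- step 2 : r - 2 ≤ 2*(s+1)^2
  have h2C : (0:ℚ) ≤ 2*C := by nlinarith [E3, hr']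
  have hE2nonneg : (0:ℚ) ≤ ((i:ℚ)+4) * ((i:ℚ)+3) * ((i:ℚ)+2) * ((i:ℚ)+1) := by nlinarith [hi']
  have hsq : (2*C)^2 ≤ (((i:ℚ)+1) * (i:ℚ) * ((s:ℚ)+1))^2 :=
    pow_le_pow_left₀ h2C E1 2
  have hprod : (((r:ℚ)+2) * ((r:ℚ)+1)) * (((i:ℚ)+4) * ((i:ℚ)+3) * ((i:ℚ)+2) * ((i:ℚ)+1))
      ≤ (2*C) * (24*C) :=
    mul_le_mul E3 E2 hE2nonneg h2C
  have pol1 : (i:ℚ)^2*((i:ℚ)+1) ≤ ((i:ℚ)+4) * ((i:ℚ)+3) * ((i:ℚ)+2) := by nlinarith [hi']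
  have pol2 : 6*((r:ℚ)-2) ≤ ((r:ℚ)+2) * ((r:ℚ)+1) := by nlinarith [hr']
  have hcomb : (6*((r:ℚ)-2)) * ((i:ℚ)^2*((i:ℚ)+1)) ≤
      (((r:ℚ)+2) * ((r:ℚ)+1)) * (((i:ℚ)+4) * ((i:ℚ)+3) * ((i:ℚ)+2)) :=
    mul_le_mul pol2 pol1 (by nlinarith [hi']) (by nlinarith [hr'])
  have hcomb2 := mul_le_mul_of_nonneg_right hcomb (show (0:ℚ) ≤ (i:ℚ)+1 by linarith)
  have hposii : (0:ℚ) < 6*(i:ℚ)^2*((i:ℚ)+1)^2 := by nlinarith [hi']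
  have h2 : (r:ℚ) - 2 ≤ 2*((s:ℚ)+1)^2 := by
    have hkey : ((r:ℚ)-2) * (6*(i:ℚ)^2*((i:ℚ)+1)^2) ≤
        (2*((s:ℚ)+1)^2) * (6*(i:ℚ)^2*((i:ℚ)+1)^2) := by
      nlinarith [hsq, hprod, hcomb2]
    exact le_of_mul_le_mul_right hkey hposii
  -- combine
  have h3 : (i:ℚ)*((r:ℚ)-2) ≤ 4*((s:ℚ)+1)^3 := by
    have := mul_le_mul h1 h2 (by linarith) (by linarith)
    nlinarith [this]
  rw [ge_iff_le, div_mul_eq_mul_div, le_div_iff₀ (by linarith : (0:ℚ) < (r:ℚ)-2)]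
  nlinarith [mul_le_mul_of_nonneg_left h3 (show (0:ℚ) ≤ (s:ℚ) by linarith)]
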